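/- (Existence of a representative subset) There exists a subset S ⊆ D with k ∈ S and |S| ≤ m + n + 1 such that the optimal value of P(S) equals the optimal value of P(D). -/

import Mathlib

open Finset

/-- Feasibility for the primal problem P(S) (inputs scaled by M at DMU k). -/
def PFeas {ι : Type*} [DecidableEq ι] {m n : ℕ} (S : Finset ι) (k : ι) (M : ℝ)
    (x : ι → Fin m → ℝ) (y : ι → Fin n → ℝ) (θ : ℝ) (lam : ι → ℝ) : Prop :=
  (∀ i, lam k * (M * x k i) + ∑ r ∈ S.erase k, lam r * x r i ≤ θ * (M * x k i)) ∧
  (∀ j, y k j ≤ lam k * y k j + ∑ r ∈ S.erase k, lam r * y r j) ∧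
  (∑ r ∈ S, lam r = 1) ∧
  (∀ r ∈ S, 0 ≤ lam r)

/-- Feasibility for the dual problem D(D). -/
def DFeas {ι : Type*} [DecidableEq ι] {m n : ℕ} (D : Finset ι) (k : ι) (M : ℝ)
    (x : ι → Fin m → ℝ) (y : ι → Fin n → ℝ)
    (u : Fin m → ℝ) (v : Fin n → ℝ) (w : ℝ) : Prop :=
  (∑ i, u i * (M * x k i)) = 1 ∧
  (∀ r ∈ D.erase k, -(∑ i, u i * x r i) + (∑ j, v j * y r j) + w ≤ 0) ∧
  (-(∑ i, u i * (M * x k i)) + (∑ j, v j * y k j) + w ≤ 0) ∧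
  (∀ i, 0 ≤ u i) ∧ (∀ j, 0 ≤ v j)

/-- Feasibility for the M = 1 dual Problem (2). -/
def Feas2 {ι : Type*} {m n : ℕ} (D : Finset ι) (k : ι)
    (x : ι → Fin m → ℝ) (y : ι → Fin n → ℝ)
    (u : Fin m → ℝ) (v : Fin n → ℝ) (w : ℝ) : Prop :=
  (∑ i, u i * x k i) = 1 ∧
  (∀ r ∈ D, -(∑ i, u i * x r i) + (∑ j, v j * y r j) + w ≤ 0) ∧
  (∀ i, 0 ≤ u i) ∧ (∀ j, 0 ≤ v j)

/-- Feasibility for the standard primal Problem (1). -/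
def Feas1 {ι : Type*} {m n : ℕ} (D : Finset ι) (k : ι)
    (x : ι → Fin m → ℝ) (y : ι → Fin n → ℝ) (θ : ℝ) (lam : ι → ℝ) : Prop :=
  (∀ i, ∑ r ∈ D, lam r * x r i ≤ θ * x k i) ∧
  (∀ j, y k j ≤ ∑ r ∈ D, lam r * y r j) ∧
  (∑ r ∈ D, lam r = 1) ∧
  (∀ r ∈ D, 0 ≤ lam r)


section Aux
variable {ι : Type*} [DecidableEq ι] {m n : ℕ}

lemma exists_dep (D : Finset ι) (hcard : m + n + 1 < D.card)
    (v : ι → (Fin m → ℝ) × (Fin n → ℝ) × ℝ) :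
    ∃ d : ι → ℝ, (∑ r ∈ D, d r • v r = 0) ∧ (∃ r ∈ D, d r ≠ 0) := by
  classical
  have hnli : ¬ LinearIndependent ℝ (fun r : ↥D => v r) := by
    intro h
    have h2 := h.fintype_card_le_finrank
    have h3 : Module.finrank ℝ ((Fin m → ℝ) × (Fin n → ℝ) × ℝ) = m + n + 1 := by
      simp [Module.finrank_prod, Module.finrank_pi]; ring
    rw [h3, Fintype.card_coe] at h2
    omega
  rw [Fintype.not_linearIndependent_iff] at hnli
  obtain ⟨g, hg, i, hi⟩ := hnli
  refine ⟨fun r => if h : r ∈ D then g ⟨r, h⟩ else 0, ?_, ⟨i, i.2, by simp [hi]⟩⟩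
  rw [← Finset.sum_attach D (fun r => (if h : r ∈ D then g ⟨r, h⟩ else 0) • v r)]
  rw [← Finset.univ_eq_attach]
  simpa using hg

lemma pfeas_mono {S D : Finset ι} {k : ι} {M : ℝ} {x : ι → Fin m → ℝ}
    {y : ι → Fin n → ℝ} {θ : ℝ} {lam : ι → ℝ} (hS : S ⊆ D) (hk : k ∈ S)
    (h : PFeas S k M x y θ lam) :
    PFeas D k M x y θ (fun r => if r ∈ S then lam r else 0) := by
  obtain ⟨hin, hout, hsum1, hnn⟩ := h
  have hsum : ∀ f : ι → ℝ,
      ∑ r ∈ D.erase k, (if r ∈ S then lam r else 0) * f r = ∑ r ∈ S.erase k, lam r * f r := by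
    intro f
    rw [← Finset.sum_subset (Finset.erase_subset_erase k hS)
      (fun r hrD hrS => by
        have : r ∉ S := fun hrs => hrS (mem_erase.2 ⟨(mem_erase.1 hrD).1, hrs⟩)
        simp [this])]
    exact Finset.sum_congr rfl fun r hr => by rw [if_pos (mem_of_mem_erase hr)]
  have hsumtot : ∑ r ∈ D, (if r ∈ S then lam r else 0) = ∑ r ∈ S, lam r := by
    rw [← Finset.sum_subset hS (fun r hrD hrS => by simp [hrS])]
    exact Finset.sum_congr rfl fun r hr => if_pos hr
  refine ⟨fun i => ?_, fun j => ?_, ?_, fun r hr => ?_⟩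
  · rw [hsum]; simp only []; rw [if_pos hk]; exact hin i
  · rw [hsum]; simp only []; rw [if_pos hk]; exact hout j
  · rw [hsumtot]; exact hsum1
  · by_cases hrs : r ∈ S <;> simp [hrs]
    exact hnn r hrs

lemma reduce_core {D : Finset ι} {k : ι} (hk : k ∈ D) {M : ℝ}
    {x : ι → Fin m → ℝ} {y : ι → Fin n → ℝ} {θ : ℝ} {lam : ι → ℝ}
    (h : PFeas D k M x y θ lam) (d : ι → ℝ)
    (hx : ∀ i, d k * (M * x k i) + ∑ r ∈ D.erase k, d r * x r i = 0)
    (hy : ∀ j, d k * y k j + ∑ r ∈ D.erase k, d r * y r j = 0)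
    (hsumd : ∑ r ∈ D, d r = 0)
    (hdk : 0 ≤ d k)
    (hneg : ∃ r ∈ D.erase k, d r < 0) :
    ∃ r0 ∈ D.erase k, ∃ lam', PFeas (D.erase r0) k M x y θ lam' := by
  classical
  obtain ⟨hin, hout, hsum1, hnn⟩ := h
  set T := (D.erase k).filter (fun r => d r < 0) with hT
  have hTne : T.Nonempty := by
    obtain ⟨r, hr, hrneg⟩ := hneg; exact ⟨r, mem_filter.2 ⟨hr, hrneg⟩⟩
  obtain ⟨r0, hr0T, hmin⟩ := T.exists_min_image (fun r => lam r / (-d r)) hTne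
  have hr0E : r0 ∈ D.erase k := (mem_filter.1 hr0T).1
  have hdr0 : d r0 < 0 := (mem_filter.1 hr0T).2
  set t := lam r0 / (-d r0) with ht
  have hr0D : r0 ∈ D := mem_of_mem_erase hr0E
  have ht0 : 0 ≤ t := div_nonneg (hnn r0 hr0D) (by linarith)
  set lam' : ι → ℝ := fun r => lam r + t * d r with hlam'
  have hz : lam' r0 = 0 := by
    have hne : -d r0 ≠ 0 := ne_of_gt (by linarith)
    have h1 : t * d r0 = -lam r0 := by
      rw [ht]; field_simp; rw [mul_div_assoc, div_self (ne_of_lt hdr0), mul_one]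
    simp only [hlam', h1]; ring
  have hnn' : ∀ r ∈ D, 0 ≤ lam' r := by
    intro r hr
    rcases le_or_gt 0 (d r) with hdr | hdr
    · exact add_nonneg (hnn r hr) (mul_nonneg ht0 hdr)
    · have hrk : r ≠ k := fun e => by rw [e] at hdr; linarith
      have hrT : r ∈ T := mem_filter.2 ⟨mem_erase.2 ⟨hrk, hr⟩, hdr⟩
      have h2 : t ≤ lam r / (-d r) := hmin r hrT
      have h3 : t * (-d r) ≤ lam r := (le_div_iff₀ (by linarith)).1 h2
      have h4 : t * (-d r) = -(t * d r) := by ring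
      simp only [hlam']; linarith
  have expand : ∀ (s : Finset ι) (f : ι → ℝ),
      ∑ r ∈ s, lam' r * f r = (∑ r ∈ s, lam r * f r) + t * ∑ r ∈ s, d r * f r := by
    intro s f
    simp only [hlam', add_mul, Finset.sum_add_distrib, Finset.mul_sum, mul_assoc]
  have hEE : (D.erase r0).erase k = (D.erase k).erase r0 := Finset.erase_right_comm
  have hsub : ∀ f : ι → ℝ,
      ∑ r ∈ (D.erase r0).erase k, lam' r * f r = ∑ r ∈ D.erase k, lam' r * f r := by
    intro f
    rw [hEE, ← Finset.add_sum_erase (D.erase k) (fun r => lam' r * f r) hr0E]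
    simp [hz]
  refine ⟨r0, hr0E, lam', fun i => ?_, fun j => ?_, ?_, fun r hr => hnn' r (mem_of_mem_erase hr)⟩
  · rw [hsub (fun r => x r i), expand]
    have key : lam' k * (M * x k i) + ((∑ r ∈ D.erase k, lam r * x r i) + t * ∑ r ∈ D.erase k, d r * x r i)
        = (lam k * (M * x k i) + ∑ r ∈ D.erase k, lam r * x r i)
          + t * (d k * (M * x k i) + ∑ r ∈ D.erase k, d r * x r i) := by
      simp only [hlam']; ring
    rw [key, hx i, mul_zero, add_zero]
    exact hin i
  · rw [hsub (fun r => y r j), expand]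
    have key : lam' k * y k j + ((∑ r ∈ D.erase k, lam r * y r j) + t * ∑ r ∈ D.erase k, d r * y r j)
        = (lam k * y k j + ∑ r ∈ D.erase k, lam r * y r j)
          + t * (d k * y k j + ∑ r ∈ D.erase k, d r * y r j) := by
      simp only [hlam']; ring
    rw [key, hy j, mul_zero, add_zero]
    exact hout j
  · have h1 : lam' r0 + ∑ r ∈ D.erase r0, lam' r = ∑ r ∈ D, lam' r :=
      Finset.add_sum_erase D lam' hr0D
    have h2 : ∑ r ∈ D, lam' r = 1 := by
      simp only [hlam', Finset.sum_add_distrib, ← Finset.mul_sum, hsum1, hsumd, mul_zero, add_zero]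
    rw [hz, zero_add] at h1
    rw [h1, h2]

lemma reduce {D : Finset ι} {k : ι} (hk : k ∈ D) {M : ℝ}
    {x : ι → Fin m → ℝ} {y : ι → Fin n → ℝ} {θ : ℝ} {lam : ι → ℝ}
    (hcard : m + n + 1 < D.card) (h : PFeas D k M x y θ lam) :
    ∃ r0 ∈ D.erase k, ∃ lam', PFeas (D.erase r0) k M x y θ lam' := by
  classical
  set v : ι → (Fin m → ℝ) × (Fin n → ℝ) × ℝ :=
    fun r => (fun i => (if r = k then M else 1) * x r i, fun j => y r j, 1) with hv
  obtain ⟨d, hd0, r1, hr1D, hr1⟩ := exists_dep D hcard v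
  have hx : ∀ i, d k * (M * x k i) + ∑ r ∈ D.erase k, d r * x r i = 0 := by
    intro i
    have h0 : (∑ r ∈ D, d r • v r).1 = (0 : Fin m → ℝ) := by rw [hd0]; rfl
    rw [Prod.fst_sum] at h0
    have h1 := congrFun h0 i
    rw [Finset.sum_apply] at h1
    simp only [hv, Prod.smul_fst, Pi.smul_apply, smul_eq_mul, Pi.zero_apply] at h1
    rw [← Finset.add_sum_erase D _ hk] at h1
    have h2 : ∑ r ∈ D.erase k, d r * ((if r = k then M else 1) * x r i)
        = ∑ r ∈ D.erase k, d r * x r i :=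
      Finset.sum_congr rfl fun r hr => by rw [if_neg (mem_erase.1 hr).1]; ring
    rw [h2] at h1
    simpa using h1
  have hy : ∀ j, d k * y k j + ∑ r ∈ D.erase k, d r * y r j = 0 := by
    intro j
    have h0 : (∑ r ∈ D, d r • v r).2.1 = (0 : Fin n → ℝ) := by rw [hd0]; rfl
    rw [Prod.snd_sum, Prod.fst_sum] at h0
    have h1 := congrFun h0 j
    rw [Finset.sum_apply] at h1
    simp only [hv, Prod.smul_snd, Prod.smul_fst, Pi.smul_apply, smul_eq_mul, Pi.zero_apply] at h1
    rw [← Finset.add_sum_erase D _ hk] at h1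
    exact h1
  have hsumd : ∑ r ∈ D, d r = 0 := by
    have h0 : (∑ r ∈ D, d r • v r).2.2 = (0 : ℝ) := by rw [hd0]; rfl
    rw [Prod.snd_sum, Prod.snd_sum] at h0
    simpa [hv] using h0
  have hpn : (∃ r ∈ D, d r < 0) ∧ (∃ r ∈ D, 0 < d r) := by
    constructor
    · by_contra hc
      push_neg at hc
      exact hr1 ((Finset.sum_eq_zero_iff_of_nonneg hc).1 hsumd r1 hr1D)
    · by_contra hc
      push_neg at hc
      have : ∑ r ∈ D, -d r = 0 := by simp [hsumd]
      have := (Finset.sum_eq_zero_iff_of_nonneg (fun r hr => by linarith [hc r hr])).1 this r1 hr1D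
      exact hr1 (by linarith)
  rcases le_or_gt 0 (d k) with hdk | hdk
  · obtain ⟨r, hrD, hrneg⟩ := hpn.1
    have hrk : r ≠ k := fun e => by rw [e] at hrneg; linarith
    exact reduce_core hk h d hx hy hsumd hdk ⟨r, mem_erase.2 ⟨hrk, hrD⟩, hrneg⟩
  · obtain ⟨r, hrD, hrpos⟩ := hpn.2
    have hrk : r ≠ k := fun e => by rw [e] at hrpos; linarith
    refine reduce_core hk h (fun r => -d r) (fun i => ?_) (fun j => ?_) ?_
      (show (0:ℝ) ≤ -d k by linarith)
      ⟨r, mem_erase.2 ⟨hrk, hrD⟩, show -d r < 0 by linarith⟩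
    · show -d k * (M * x k i) + ∑ r ∈ D.erase k, -d r * x r i = 0
      have := hx i
      simp only [neg_mul, Finset.sum_neg_distrib]
      linarith
    · show -d k * y k j + ∑ r ∈ D.erase k, -d r * y r j = 0
      have := hy j
      simp only [neg_mul, Finset.sum_neg_distrib]
      linarith
    · show ∑ r ∈ D, -d r = 0
      simp [Finset.sum_neg_distrib, hsumd]

lemma main_lemma (M : ℝ) (x : ι → Fin m → ℝ) (y : ι → Fin n → ℝ) (θD : ℝ) (k : ι) :
    ∀ N : ℕ, ∀ D : Finset ι, D.card ≤ N → k ∈ D →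
      IsLeast {θ : ℝ | ∃ lam : ι → ℝ, PFeas D k M x y θ lam} θD →
      ∃ S : Finset ι, S ⊆ D ∧ k ∈ S ∧ S.card ≤ m + n + 1 ∧
        IsLeast {θ : ℝ | ∃ lam : ι → ℝ, PFeas S k M x y θ lam} θD := by
  intro N
  induction N with
  | zero =>
    intro D hD hkD _
    exact absurd (Finset.card_eq_zero.1 (Nat.le_zero.1 hD) ▸ hkD) (Finset.notMem_empty k)
  | succ N ih =>
    intro D hcard hkD hθ
    by_cases hle : D.card ≤ m + n + 1
    · exact ⟨D, subset_rfl, hkD, hle, hθ⟩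
    · push_neg at hle
      obtain ⟨lam, hlam⟩ := hθ.1
      obtain ⟨r0, hr0, lam', hlam'⟩ := reduce hkD hle hlam
      have hr0D : r0 ∈ D := mem_of_mem_erase hr0
      have hkD' : k ∈ D.erase r0 := mem_erase.2 ⟨fun e => (mem_erase.1 hr0).1 e.symm, hkD⟩
      have hleast' : IsLeast {θ : ℝ | ∃ lam : ι → ℝ, PFeas (D.erase r0) k M x y θ lam} θD := by
        constructor
        · exact ⟨lam', hlam'⟩
        · rintro θ ⟨μ, hμ⟩
          exact hθ.2 ⟨_, pfeas_mono (Finset.erase_subset r0 D) hkD' hμ⟩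
      have hcard' : (D.erase r0).card ≤ N := by
        have := Finset.card_erase_of_mem hr0D
        omega
      obtain ⟨S, hS1, hS2, hS3, hS4⟩ := ih (D.erase r0) hcard' hkD' hleast'
      exact ⟨S, hS1.trans (Finset.erase_subset r0 D), hS2, hS3, hS4⟩

end Aux

theorem stmt16 {ι : Type*} [DecidableEq ι] {m n : ℕ} (D : Finset ι) (k : ι) (hk : k ∈ D)
    (M : ℝ) (hM : 1 ≤ M) (x : ι → Fin m → ℝ) (y : ι → Fin n → ℝ)
    (θD : ℝ)
    (hθD : IsLeast {θ : ℝ | ∃ lam : ι → ℝ, PFeas D k M x y θ lam} θD) :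
    ∃ S : Finset ι, S ⊆ D ∧ k ∈ S ∧ S.card ≤ m + n + 1 ∧
      IsLeast {θ : ℝ | ∃ lam : ι → ℝ, PFeas S k M x y θ lam} θD :=
  main_lemma M x y θD k D.card D le_rfl hk hθD
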